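/- Let p be an odd prime, ℓ ≥ 1, q = p^ℓ, d ≥ 2, and let j be a unit of ℤ/qℤ. Let S_j = {x ∈ (ℤ/qℤ)^d : x₁² + ⋯ + x_d² = j} be the sphere of radius j. Then | |S_j| − q^{d−1} | ≤ 2ℓ · q^{d−1} · p^{−(d−1)/2}. -/

import Mathlib

open Finset AddChar MulChar

variable (P : ℕ) [Fact P.Prime]

lemma sq_sum_char (hP : P ≠ 2) (a : ZMod P) (ha : a ≠ 0) :
    ∑ t : ZMod P, ZMod.stdAddChar (a * t ^ 2) =
      ((quadraticChar (ZMod P)).ringHomComp (Int.castRingHom ℂ)) a *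
        gaussSum ((quadraticChar (ZMod P)).ringHomComp (Int.castRingHom ℂ)) ZMod.stdAddChar := by
  have hP1 : Fact (1 < P) := ⟨(Fact.out : P.Prime).one_lt⟩
  set χ := (quadraticChar (ZMod P)).ringHomComp (Int.castRingHom ℂ) with hχdef
  set ψ : AddChar (ZMod P) ℂ := ZMod.stdAddChar with hψdef
  have hchar : ringChar (ZMod P) ≠ 2 := by
    rwa [ZMod.ringChar_zmod_n]
  -- group by the value of t^2
  have h1 : ∑ t : ZMod P, ψ (a * t ^ 2) =
      ∑ s : ZMod P, ∑ t ∈ univ.filter (fun t : ZMod P => t ^ 2 = s), ψ (a * t ^ 2) :=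
    (Finset.sum_fiberwise univ (fun t : ZMod P => t ^ 2) (fun t => ψ (a * t ^ 2))).symm
  rw [h1]
  have h2 : ∀ s : ZMod P, ∑ t ∈ univ.filter (fun t : ZMod P => t ^ 2 = s), ψ (a * t ^ 2)
      = (χ s + 1) * ψ (a * s) := by
    intro s
    have : ∑ t ∈ univ.filter (fun t : ZMod P => t ^ 2 = s), ψ (a * t ^ 2)
        = ∑ t ∈ univ.filter (fun t : ZMod P => t ^ 2 = s), ψ (a * s) := by
      refine Finset.sum_congr rfl fun t ht => ?_
      rw [(Finset.mem_filter.mp ht).2]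
    rw [this, Finset.sum_const, nsmul_eq_mul]
    congr 1
    have hcard := quadraticChar_card_sqrts hchar s
    rw [Set.toFinset_setOf] at hcard
    have : ((univ.filter (fun t : ZMod P => t ^ 2 = s)).card : ℤ) = quadraticChar (ZMod P) s + 1 := by
      exact_mod_cast hcard
    have := congrArg (fun z : ℤ => (z : ℂ)) this
    simpa [hχdef, MulChar.ringHomComp_apply] using this
  simp_rw [h2, add_mul, one_mul, Finset.sum_add_distrib]
  have h3 : ∑ s : ZMod P, ψ (a * s) = 0 := by
    have := AddChar.sum_mulShift (R := ZMod P) (R' := ℂ) a (ZMod.isPrimitive_stdAddChar P)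
    simp only [if_neg ha] at this
    calc ∑ s : ZMod P, ψ (a * s) = ∑ s : ZMod P, ψ (s * a) := by simp_rw [mul_comm]
    _ = 0 := by exact_mod_cast this
  rw [h3, add_zero]
  -- the remaining sum is a shifted Gauss sum
  have hunit : IsUnit a := isUnit_iff_ne_zero.mpr ha
  have hshift := gaussSum_mulShift χ ψ hunit.unit
  have hsq : χ a * χ a = 1 := by
    have := quadraticChar_sq_one (F := ZMod P) ha
    have := congrArg (fun z : ℤ => (z : ℂ)) this
    simpa [hχdef, MulChar.ringHomComp_apply, pow_two, mul_comm] using this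
  have : ∑ s : ZMod P, χ s * ψ (a * s) = gaussSum χ (AddChar.mulShift ψ a) := by
    simp [gaussSum, AddChar.mulShift_apply]
  rw [this]
  have h4 : χ ↑hunit.unit = χ a := by rw [IsUnit.unit_spec]
  calc gaussSum χ (AddChar.mulShift ψ a)
      = (χ a * χ a) * gaussSum χ (AddChar.mulShift ψ a) := by rw [hsq, one_mul]
    _ = χ a * (χ a * gaussSum χ (AddChar.mulShift ψ a)) := by ring
    _ = χ a * gaussSum χ ψ := by
        rw [← h4]
        have : AddChar.mulShift ψ a = AddChar.mulShift ψ ↑hunit.unit := by rw [IsUnit.unit_spec]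
        rw [this, hshift]

lemma addChar_map_sum {A : Type*} [AddCommGroup A] {ι : Type*} (ψ : AddChar A ℂ)
    (s : Finset ι) (f : ι → A) : ψ (∑ i ∈ s, f i) = ∏ i ∈ s, ψ (f i) := by
  induction s using Finset.cons_induction with
  | empty => simp
  | cons a s ha ih => rw [Finset.sum_cons, Finset.prod_cons, AddChar.map_add_eq_mul, ih]

lemma sphere_count_prime (hP : P ≠ 2) (d : ℕ) (hd : 1 ≤ d) (j : ZMod P) (hj : j ≠ 0) :
    (((univ.filter fun x : Fin d → ZMod P => ∑ i, x i ^ 2 = j).card : ℝ) - (P : ℝ) ^ (d - 1)) ^ 2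
      ≤ (P : ℝ) ^ (d - 1) := by
  have hP1 : Fact (1 < P) := ⟨(Fact.out : P.Prime).one_lt⟩
  have hP0 : (0 : ℝ) < P := by exact_mod_cast (Fact.out : P.Prime).pos
  set χ := (quadraticChar (ZMod P)).ringHomComp (Int.castRingHom ℂ) with hχdef
  set ψ : AddChar (ZMod P) ℂ := ZMod.stdAddChar with hψdef
  have hψprim : ψ.IsPrimitive := ZMod.isPrimitive_stdAddChar P
  have hchar : ringChar (ZMod P) ≠ 2 := by rwa [ZMod.ringChar_zmod_n]
  have hχ1 : χ ≠ 1 := (MulChar.ringHomComp_ne_one_iff (RingHom.injective_int _)).mpr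
    (quadraticChar_ne_one hchar)
  have hχ2 : χ.IsQuadratic := (quadraticChar_isQuadratic (ZMod P)).comp _
  set g := gaussSum χ ψ with hgdef
  have hcardP : (Fintype.card (ZMod P) : ℂ) = (P : ℂ) := by rw [ZMod.card]
  have hg2 : g ^ 2 = χ (-1) * P := by rw [hgdef, gaussSum_sq hχ1 hχ2 hψprim, hcardP]
  have hχpm : ∀ a : ZMod P, a ≠ 0 → χ a = 1 ∨ χ a = -1 := by
    intro a ha
    rcases quadraticChar_dichotomy (F := ZMod P) ha with h | h <;>
      [left; right] <;>
      · have := congrArg (fun z : ℤ => (z : ℂ)) h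
        simpa [hχdef, MulChar.ringHomComp_apply] using this
  have habsχ : ∀ a : ZMod P, a ≠ 0 → ‖χ a‖ = 1 := by
    intro a ha
    rcases hχpm a ha with h | h <;> simp [h]
  have habsg : ‖g‖ ^ 2 = P := by
    have : ‖g ^ 2‖ = P := by
      rw [hg2, norm_mul]
      rw [habsχ (-1) (by simpa using (neg_ne_zero.mpr (one_ne_zero)))]
      simp
    simpa [norm_pow] using this
  set N := (univ.filter fun x : Fin d → ZMod P => ∑ i, x i ^ 2 = j).card with hN
  -- the basic character-sum identity
  have key : (N : ℂ) * P = ∑ a : ZMod P, ψ (-(a * j)) * (∑ t : ZMod P, ψ (a * t ^ 2)) ^ d := by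
    have lhs : (N : ℂ) * P =
        ∑ x : Fin d → ZMod P, ∑ a : ZMod P, ψ (a * ((∑ i, x i ^ 2) - j)) := by
      have hx : ∀ x : Fin d → ZMod P, ∑ a : ZMod P, ψ (a * ((∑ i, x i ^ 2) - j))
          = if (∑ i, x i ^ 2) = j then (P : ℂ) else 0 := by
        intro x
        have := AddChar.sum_mulShift (R := ZMod P) (R' := ℂ) ((∑ i, x i ^ 2) - j) hψprim
        rw [this]
        by_cases h : (∑ i, x i ^ 2) = j
        · rw [if_pos (by rw [h, sub_self]), if_pos h, ZMod.card]
        · rw [if_neg (fun hh => h (sub_eq_zero.mp hh)), if_neg h, Nat.cast_zero]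
      simp_rw [hx]
      rw [Finset.sum_ite, Finset.sum_const_zero, add_zero, Finset.sum_const, nsmul_eq_mul]
    rw [lhs, Finset.sum_comm]
    refine Finset.sum_congr rfl fun a _ => ?_
    have expand : ∀ x : Fin d → ZMod P,
        ψ (a * ((∑ i, x i ^ 2) - j)) = ψ (-(a * j)) * ∏ i, ψ (a * x i ^ 2) := by
      intro x
      have : a * ((∑ i, x i ^ 2) - j) = -(a * j) + ∑ i, a * x i ^ 2 := by
        rw [mul_sub, Finset.mul_sum]; ring
      rw [this, AddChar.map_add_eq_mul]
      congr 1
      exact addChar_map_sum ψ _ _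
    simp_rw [expand]
    rw [← Finset.mul_sum]
    congr 1
    exact (Fintype.sum_pow (fun t : ZMod P => ψ (a * t ^ 2)) d).symm
  -- split off the a = 0 term
  have split : (N : ℂ) * P - (P : ℂ) ^ d =
      g ^ d * ∑ a ∈ univ.erase (0 : ZMod P), ψ (-(a * j)) * χ a ^ d := by
    have h0 : ψ (-((0 : ZMod P) * j)) * (∑ t : ZMod P, ψ ((0 : ZMod P) * t ^ 2)) ^ d
        = (P : ℂ) ^ d := by
      simp [hcardP]
    have hsum := (Finset.add_sum_erase univ
      (fun a : ZMod P => ψ (-(a * j)) * (∑ t : ZMod P, ψ (a * t ^ 2)) ^ d)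
      (Finset.mem_univ (0 : ZMod P))).symm
    rw [key, hsum, h0, add_sub_cancel_left, Finset.mul_sum]
    refine Finset.sum_congr rfl fun a ha => ?_
    have ha0 : a ≠ 0 := Finset.ne_of_mem_erase ha
    rw [sq_sum_char P hP a ha0, mul_pow]
    ring
  set T := ∑ a ∈ univ.erase (0 : ZMod P), ψ (-(a * j)) * χ a ^ d with hT
  have habsT : ‖T‖ ^ 2 ≤ P := by
    rcases Nat.even_or_odd d with hpar | hpar
    · -- d even : T = -1
      have hTval : T = -1 := by
        have : ∀ a ∈ univ.erase (0 : ZMod P), ψ (-(a * j)) * χ a ^ d = ψ (-(a * j)) := by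
          intro a ha
          have ha0 : a ≠ 0 := Finset.ne_of_mem_erase ha
          rcases hχpm a ha0 with h | h
          · rw [h, one_pow, mul_one]
          · rw [h, hpar.neg_one_pow, mul_one]
        rw [hT, Finset.sum_congr rfl this]
        have hfull : ∑ a : ZMod P, ψ (-(a * j)) = 0 := by
          have := AddChar.sum_mulShift (R := ZMod P) (R' := ℂ) (-j) hψprim
          rw [if_neg (neg_ne_zero.mpr hj)] at this
          calc ∑ a : ZMod P, ψ (-(a * j)) = ∑ a : ZMod P, ψ (a * (-j)) := by
                refine Finset.sum_congr rfl fun a _ => ?_; ring_nf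
            _ = 0 := by exact_mod_cast this
        have := (Finset.add_sum_erase univ (fun a : ZMod P => ψ (-(a * j)))
          (Finset.mem_univ (0 : ZMod P))).symm
        rw [hfull] at this
        simp only [zero_mul, neg_zero, AddChar.map_zero_eq_one] at this
        linear_combination -this
      have habs1 : ‖(-1 : ℂ)‖ = 1 := by simp
      rw [hTval, habs1, one_pow]
      exact_mod_cast (Fact.out : P.Prime).one_lt.le
    · -- d odd : T = χ(-j) * g
      have hTval : T = χ (-j) * g := by
        have step : ∀ a ∈ univ.erase (0 : ZMod P), ψ (-(a * j)) * χ a ^ d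
            = χ a * ψ ((-j) * a) := by
          intro a ha
          have ha0 : a ≠ 0 := Finset.ne_of_mem_erase ha
          have hpow : χ a ^ d = χ a := by
            rcases hχpm a ha0 with h | h
            · rw [h, one_pow]
            · rw [h, hpar.neg_one_pow]
          rw [hpow]
          have : -(a * j) = (-j) * a := by ring
          rw [this, mul_comm]
        rw [hT, Finset.sum_congr rfl step]
        have full : ∑ a ∈ univ.erase (0 : ZMod P), χ a * ψ ((-j) * a)
            = ∑ a : ZMod P, χ a * ψ ((-j) * a) := by
          refine Finset.sum_erase _ ?_
          simp
        rw [full]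
        have hgs : ∑ a : ZMod P, χ a * ψ ((-j) * a) = gaussSum χ (AddChar.mulShift ψ (-j)) := by
          simp [gaussSum, AddChar.mulShift_apply]
        rw [hgs]
        have hju : IsUnit (-j) := (isUnit_iff_ne_zero.mpr (neg_ne_zero.mpr hj))
        have hshift := gaussSum_mulShift χ ψ hju.unit
        have h4 : χ ↑hju.unit = χ (-j) := by rw [IsUnit.unit_spec]
        have hsq : χ (-j) * χ (-j) = 1 := by
          have := quadraticChar_sq_one (F := ZMod P) (neg_ne_zero.mpr hj)
          have := congrArg (fun z : ℤ => (z : ℂ)) this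
          simpa [hχdef, MulChar.ringHomComp_apply, pow_two, mul_comm] using this
        calc gaussSum χ (AddChar.mulShift ψ (-j))
            = (χ (-j) * χ (-j)) * gaussSum χ (AddChar.mulShift ψ (-j)) := by rw [hsq, one_mul]
          _ = χ (-j) * (χ (-j) * gaussSum χ (AddChar.mulShift ψ (-j))) := by ring
          _ = χ (-j) * g := by
              rw [← h4]
              have : AddChar.mulShift ψ (-j) = AddChar.mulShift ψ ↑hju.unit := by
                rw [IsUnit.unit_spec]
              rw [this, hshift]
      rw [hTval, norm_mul, mul_pow, habsχ (-j) (neg_ne_zero.mpr hj), habsg, one_pow, one_mul]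
  -- put the estimate together
  have habs : ‖(N : ℂ) * P - (P : ℂ) ^ d‖ ^ 2 ≤ (P : ℝ) ^ (d + 1) := by
    rw [split, norm_mul, mul_pow, norm_pow, ← pow_mul, mul_comm d 2, pow_mul, habsg]
    calc (P : ℝ) ^ d * ‖T‖ ^ 2 ≤ (P : ℝ) ^ d * P := by
          exact mul_le_mul_of_nonneg_left habsT (by positivity)
      _ = (P : ℝ) ^ (d + 1) := by rw [pow_succ]
  have hreal : ((N : ℝ) * P - (P : ℝ) ^ d) ^ 2 ≤ (P : ℝ) ^ (d + 1) := by
    have : ((N : ℂ) * P - (P : ℂ) ^ d) = (((N : ℝ) * P - (P : ℝ) ^ d : ℝ) : ℂ) := by push_cast; ring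
    rw [this, Complex.norm_real, Real.norm_eq_abs, sq_abs] at habs
    exact habs
  have hfact : (N : ℝ) * P - (P : ℝ) ^ d = P * ((N : ℝ) - (P : ℝ) ^ (d - 1)) := by
    have e1 : d - 1 + 1 = d := Nat.sub_add_cancel hd
    have : (P : ℝ) ^ d = P * (P : ℝ) ^ (d - 1) := by
      conv_lhs => rw [← e1]
      rw [pow_succ]; ring
    rw [this]; ring
  rw [hfact, mul_pow] at hreal
  have e2 : 2 + (d - 1) = d + 1 := by
    have h := Nat.sub_add_cancel hd
    calc 2 + (d - 1) = (d - 1 + 1) + 1 := by ring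
      _ = d + 1 := by rw [h]
  have hexp : (P : ℝ) ^ (d + 1) = (P : ℝ) ^ 2 * (P : ℝ) ^ (d - 1) := by
    rw [← pow_add, e2]
  rw [hexp] at hreal
  have hp2 : (0 : ℝ) < (P : ℝ) ^ 2 := by positivity
  nlinarith [hreal, hp2]


lemma linear_count {K : Type*} [Field K] [Fintype K] [DecidableEq K] (d : ℕ) (hd : 1 ≤ d)
    (w : Fin d → K) (hw : ∃ i, w i ≠ 0) (e : K) :
    (univ.filter fun t : Fin d → K => ∑ i, w i * t i = e).card = Fintype.card K ^ (d - 1) := by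
  obtain ⟨i₀, hi₀⟩ := hw
  set S : K → (Fin d → K) := fun c => Pi.single i₀ c with hS
  have key : ∀ (c : K) (t : Fin d → K),
      ∑ i, w i * (t i + S c i) = (∑ i, w i * t i) + w i₀ * c := by
    intro c t
    rw [Finset.sum_congr rfl (fun i _ => mul_add (w i) (t i) (S c i)),
      Finset.sum_add_distrib]
    congr 1
    simp [hS, Pi.single_apply, mul_ite]
  have hshift : ∀ (t : Fin d → K) (a b : K),
      (t + S a) + S b = t + S (a + b) := by
    intro t a b
    funext i
    simp [hS, Pi.single_apply]
    split <;> ring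
  have hbij : ∀ e' : K, (univ.filter fun t : Fin d → K => ∑ i, w i * t i = e').card
      = (univ.filter fun t : Fin d → K => ∑ i, w i * t i = e).card := by
    intro e'
    refine Finset.card_bij' (fun t _ => t + S ((e - e') / w i₀))
      (fun t _ => t + S ((e' - e) / w i₀)) ?_ ?_ ?_ ?_
    · intro t ht
      rw [Finset.mem_filter] at ht ⊢
      refine ⟨Finset.mem_univ _, ?_⟩
      show ∑ i, w i * (t i + S ((e - e') / w i₀) i) = e
      rw [key, ht.2, mul_comm, div_mul_cancel₀ _ hi₀]
      ring
    · intro t ht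
      rw [Finset.mem_filter] at ht ⊢
      refine ⟨Finset.mem_univ _, ?_⟩
      show ∑ i, w i * (t i + S ((e' - e) / w i₀) i) = e'
      rw [key, ht.2, mul_comm, div_mul_cancel₀ _ hi₀]
      ring
    · intro t ht
      show (t + S ((e - e') / w i₀)) + S ((e' - e) / w i₀) = t
      rw [hshift]
      have : (e - e') / w i₀ + (e' - e) / w i₀ = 0 := by
        rw [← add_div]
        simp
      rw [this]
      simp [hS]
    · intro t ht
      show (t + S ((e' - e) / w i₀)) + S ((e - e') / w i₀) = t
      rw [hshift]
      have : (e' - e) / w i₀ + (e - e') / w i₀ = 0 := by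
        rw [← add_div]
        simp
      rw [this]
      simp [hS]
  have htotal : (Fintype.card K) ^ d = Fintype.card K *
      (univ.filter fun t : Fin d → K => ∑ i, w i * t i = e).card := by
    have := Finset.card_eq_sum_card_fiberwise
      (f := fun t : Fin d → K => ∑ i, w i * t i) (s := univ) (t := univ)
      (fun x _ => Finset.mem_univ _)
    rw [Finset.sum_congr rfl (fun e' _ => hbij e'), Finset.sum_const, Finset.card_univ,
      smul_eq_mul] at this
    rw [Finset.card_univ] at this
    calc Fintype.card K ^ d = Fintype.card (Fin d → K) := by simp [Fintype.card_pi]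
      _ = _ := this
  have hK : 0 < Fintype.card K := Fintype.card_pos
  have hd1 : d - 1 + 1 = d := Nat.sub_add_cancel hd
  have : Fintype.card K * Fintype.card K ^ (d - 1) = Fintype.card K *
      (univ.filter fun t : Fin d → K => ∑ i, w i * t i = e).card := by
    rw [← htotal, ← pow_succ']
    rw [hd1]
  exact (Nat.eq_of_mul_eq_mul_left hK this).symm

section Mu

variable (p n : ℕ) [Fact p.Prime]

/-- The injection `ZMod p → ZMod (p^(n+1))` by `t ↦ p^n * t`. -/
def mu (t : ZMod p) : ZMod (p ^ (n + 1)) := ((p ^ n * t.val : ℕ) : ZMod (p ^ (n + 1)))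

lemma mu_natCast (m : ℕ) : ((p ^ n * m : ℕ) : ZMod (p ^ (n + 1))) = mu p n ((m : ZMod p)) := by
  rw [mu, ZMod.natCast_eq_natCast_iff]
  have h1 : m ≡ (m : ZMod p).val [MOD p] := by
    rw [ZMod.val_natCast]
    exact (Nat.mod_modEq m p).symm
  have := h1.mul_left' (c := p ^ n)
  rwa [← pow_succ] at this

lemma mu_add (s t : ZMod p) : mu p n (s + t) = mu p n s + mu p n t := by
  have hs : ((s.val : ℕ) : ZMod p) = s := ZMod.natCast_rightInverse s
  have ht : ((t.val : ℕ) : ZMod p) = t := ZMod.natCast_rightInverse t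
  have h : s + t = (((s.val + t.val : ℕ)) : ZMod p) := by push_cast [hs, ht]; ring
  rw [h, ← mu_natCast]
  show (((p ^ n * (s.val + t.val) : ℕ)) : ZMod (p ^ (n + 1))) = _
  rw [mu, mu]
  push_cast
  ring

lemma mu_inj {s t : ZMod p} (h : mu p n s = mu p n t) : s = t := by
  rw [mu, mu, ZMod.natCast_eq_natCast_iff] at h
  have hp0 : p ^ n ≠ 0 := pow_ne_zero n (Fact.out : p.Prime).ne_zero
  rw [pow_succ] at h
  have h2 : s.val ≡ t.val [MOD p] := Nat.ModEq.mul_left_cancel' hp0 h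
  have h3 : s.val = t.val := by
    have hs := ZMod.val_lt s
    have ht := ZMod.val_lt t
    rwa [Nat.ModEq, Nat.mod_eq_of_lt hs, Nat.mod_eq_of_lt ht] at h2
  calc s = ((s.val : ℕ) : ZMod p) := (ZMod.natCast_rightInverse s).symm
    _ = ((t.val : ℕ) : ZMod p) := by rw [h3]
    _ = t := ZMod.natCast_rightInverse t

lemma mu_mul_mu (hn : 1 ≤ n) (s t : ZMod p) : mu p n s * mu p n t = 0 := by
  rw [mu, mu, ← Nat.cast_mul, ZMod.natCast_eq_zero_iff]
  have : p ^ (n + 1) ∣ p ^ n * p ^ n := by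
    rw [← pow_add]
    exact pow_dvd_pow p (by omega)
  calc p ^ (n + 1) ∣ p ^ n * p ^ n := this
    _ ∣ p ^ n * s.val * (p ^ n * t.val) :=
        mul_dvd_mul (dvd_mul_right _ _) (dvd_mul_right _ _)

lemma mu_mul (z : ZMod (p ^ (n + 1))) (t : ZMod p) :
    z * mu p n t = mu p n (ZMod.castHom (dvd_pow_self p (Nat.succ_ne_zero n)) (ZMod p) z * t) := by
  have hz : ((z.val : ℕ) : ZMod (p ^ (n + 1))) = z := ZMod.natCast_rightInverse z
  have ht : ((t.val : ℕ) : ZMod p) = t := ZMod.natCast_rightInverse t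
  have h1 : z * mu p n t = ((z.val * (p ^ n * t.val) : ℕ) : ZMod (p ^ (n + 1))) := by
    rw [mu]
    push_cast
    rw [hz]
  have h2 : (z.val * (p ^ n * t.val) : ℕ) = (p ^ n * (z.val * t.val) : ℕ) := by ring
  rw [h1, h2, mu_natCast]
  congr 1
  push_cast
  rw [ht]
  congr 1
  rw [ZMod.castHom_apply, ← ZMod.natCast_val]

lemma mu_ker (x : ZMod (p ^ (n + 1))) :
    ZMod.castHom (pow_dvd_pow p (Nat.le_succ n)) (ZMod (p ^ n)) x = 0 ↔ ∃ t, x = mu p n t := by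
  constructor
  · intro h
    have hx : ((x.val : ℕ) : ZMod (p ^ (n + 1))) = x := ZMod.natCast_rightInverse x
    rw [← hx, map_natCast, ZMod.natCast_eq_zero_iff] at h
    obtain ⟨k, hk⟩ := h
    refine ⟨(k : ZMod p), ?_⟩
    rw [← mu_natCast, ← hk, hx]
  · rintro ⟨t, rfl⟩
    rw [mu, map_natCast, ZMod.natCast_eq_zero_iff]
    exact dvd_mul_right _ _

lemma mu_sum {ι : Type*} (s : Finset ι) (f : ι → ZMod p) :
    mu p n (∑ i ∈ s, f i) = ∑ i ∈ s, mu p n (f i) := by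
  induction s using Finset.cons_induction with
  | empty => simp [mu]
  | cons a s ha ih => rw [Finset.sum_cons, Finset.sum_cons, mu_add, ih]

end Mu

lemma hensel_step (p n d : ℕ) [Fact p.Prime] (hp2 : p ≠ 2) (hn : 1 ≤ n) (hd : 1 ≤ d)
    (j : ZMod (p ^ (n + 1))) (hj : IsUnit j) :
    (univ.filter fun x : Fin d → ZMod (p ^ (n + 1)) => ∑ i, x i ^ 2 = j).card
      = p ^ (d - 1) *
        (univ.filter fun y : Fin d → ZMod (p ^ n) =>
          ∑ i, y i ^ 2 = ZMod.castHom (pow_dvd_pow p (Nat.le_succ n)) (ZMod (p ^ n)) j).card := by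
  have hp : p.Prime := Fact.out
  set π : ZMod (p ^ (n + 1)) →+* ZMod (p ^ n) :=
    ZMod.castHom (pow_dvd_pow p (Nat.le_succ n)) (ZMod (p ^ n)) with hπ
  set ρ : ZMod (p ^ (n + 1)) →+* ZMod p :=
    ZMod.castHom (dvd_pow_self p (Nat.succ_ne_zero n)) (ZMod p) with hρ
  set A := univ.filter fun x : Fin d → ZMod (p ^ (n + 1)) => ∑ i, x i ^ 2 = j with hA
  set B := univ.filter fun y : Fin d → ZMod (p ^ n) => ∑ i, y i ^ 2 = π j with hB
  have hmaps : ∀ x ∈ A, (fun i => π (x i)) ∈ B := by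
    intro x hx
    rw [hA, Finset.mem_filter] at hx
    rw [hB, Finset.mem_filter]
    refine ⟨Finset.mem_univ _, ?_⟩
    rw [← hx.2, map_sum]
    simp [map_pow]
  rw [Finset.card_eq_sum_card_fiberwise hmaps]
  have hfiber : ∀ y ∈ B, (A.filter fun x => (fun i => π (x i)) = y).card = p ^ (d - 1) := by
    intro y hy
    rw [hB, Finset.mem_filter] at hy
    have hy2 := hy.2
    -- the canonical lift of y
    set z : Fin d → ZMod (p ^ (n + 1)) := fun i => (((y i).val : ℕ) : ZMod (p ^ (n + 1))) with hz
    have hπz : ∀ i, π (z i) = y i := by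
      intro i
      rw [hz]
      simp only [map_natCast]
      exact ZMod.natCast_rightInverse (y i)
    have hker0 : π (j - ∑ i, z i ^ 2) = 0 := by
      rw [map_sub, map_sum]
      simp only [map_pow, hπz]
      rw [hy2, sub_self]
    obtain ⟨c, hc⟩ := (mu_ker p n _).mp hker0
    -- the linear form
    set w : Fin d → ZMod p := fun i => 2 * ρ (z i) with hw
    have h2ne : (2 : ZMod p) ≠ 0 := by
      have : ((2 : ℕ) : ZMod p) ≠ 0 := by
        rw [Ne, ZMod.natCast_eq_zero_iff]
        intro h
        rcases (Nat.prime_dvd_prime_iff_eq hp Nat.prime_two).mp h with h'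
        exact hp2 h'
      simpa using this
    have hρμ : ∀ t : ZMod p, ρ (mu p n t) = 0 := by
      intro t
      rw [mu, map_natCast, ZMod.natCast_eq_zero_iff]
      exact Dvd.dvd.mul_right (dvd_pow_self p (by omega)) _
    have hwne : ∃ i, w i ≠ 0 := by
      by_contra hcon
      push_neg at hcon
      have hzi : ∀ i, ρ (z i) = 0 := by
        intro i
        have := hcon i
        rw [hw] at this
        simp only at this
        rcases mul_eq_zero.mp this with h | h
        · exact absurd h h2ne
        · exact h
      have hρj : ρ j = 0 := by
        have : j = ∑ i, z i ^ 2 + mu p n c := by rw [← hc]; ring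
        rw [this, map_add, map_sum, hρμ]
        simp only [map_pow, hzi]
        simp
      have : IsUnit (ρ j) := hj.map ρ
      rw [hρj] at this
      exact (by simpa using this : IsUnit (0 : ZMod p)).ne_zero rfl
    -- key expansion of the sum of squares of a lifted point
    have expand : ∀ t : Fin d → ZMod p,
        ∑ i, (z i + mu p n (t i)) ^ 2 = (∑ i, z i ^ 2) + mu p n (∑ i, w i * t i) := by
      intro t
      have e1 : ∀ i, (z i + mu p n (t i)) ^ 2 = z i ^ 2 + mu p n (w i * t i) := by
        intro i
        have e2 : (z i + mu p n (t i)) ^ 2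
            = z i ^ 2 + (z i * mu p n (t i) + z i * mu p n (t i))
              + mu p n (t i) * mu p n (t i) := by ring
        rw [mu_mul_mu p n hn, mu_mul p n, ← mu_add] at e2
        rw [e2, add_zero]
        congr 1
        congr 1
        rw [hw, ← hρ]
        ring
      rw [Finset.sum_congr rfl (fun i _ => e1 i), Finset.sum_add_distrib, mu_sum]
    have hπμ : ∀ t : ZMod p, π (mu p n t) = 0 := fun t => (mu_ker p n _).mpr ⟨t, rfl⟩
    have hcardeq : (univ.filter fun t : Fin d → ZMod p => ∑ i, w i * t i = c).card
        = (A.filter fun x => (fun i => π (x i)) = y).card := by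
      refine Finset.card_bij (fun t _ => fun i => z i + mu p n (t i)) ?_ ?_ ?_
      · -- maps into the fiber
        intro t ht
        rw [Finset.mem_filter] at ht
        rw [Finset.mem_filter, hA, Finset.mem_filter]
        refine ⟨⟨Finset.mem_univ _, ?_⟩, ?_⟩
        · rw [expand t, ht.2, ← hc]
          ring
        · funext i
          show π (z i + mu p n (t i)) = y i
          rw [map_add, hπz, hπμ, add_zero]
      · -- injective
        intro t ht t' ht' heq
        funext i
        have := congrFun heq i
        simp only [add_right_inj] at this
        exact mu_inj p n this
      · -- surjective
        intro x hx
        rw [Finset.mem_filter, hA, Finset.mem_filter] at hx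
        have hxy : ∀ i, π (x i) = y i := fun i => congrFun hx.2 i
        have hker : ∀ i, ∃ t, x i - z i = mu p n t := by
          intro i
          refine (mu_ker p n _).mp ?_
          rw [map_sub, hxy, hπz, sub_self]
        choose t ht using hker
        have hxi : ∀ i, x i = z i + mu p n (t i) := by
          intro i
          rw [← ht i]
          ring
        refine ⟨t, ?_, ?_⟩
        · rw [Finset.mem_filter]
          refine ⟨Finset.mem_univ _, ?_⟩
          apply mu_inj p n
          rw [← hc]
          have := hx.1.2
          rw [Finset.sum_congr rfl (fun i _ => by rw [hxi i]), expand t] at this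
          rw [← this]
          ring
        · funext i
          exact (hxi i).symm
    rw [← hcardeq, linear_count d hd w hwne c, ZMod.card]
  rw [Finset.sum_congr rfl hfiber, Finset.sum_const, smul_eq_mul, mul_comm]

lemma sphere_count_pow (p d : ℕ) [Fact p.Prime] (hp2 : p ≠ 2) (hd : 1 ≤ d) :
    ∀ n : ℕ, 1 ≤ n → ∀ j : ZMod (p ^ n), IsUnit j →
      (((univ.filter fun x : Fin d → ZMod (p ^ n) => ∑ i, x i ^ 2 = j).card : ℝ)
          - (p : ℝ) ^ (n * (d - 1))) ^ 2
        ≤ (p : ℝ) ^ ((2 * n - 1) * (d - 1)) := by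
  have hp : p.Prime := Fact.out
  intro n
  induction n with
  | zero => intro h; exact absurd h (by norm_num)
  | succ n ih =>
    intro _ j hj
    rcases Nat.eq_zero_or_pos n with rfl | hn
    · -- base case: n + 1 = 1
      haveI hfact : Fact ((p ^ (0 + 1)).Prime) := ⟨by rwa [zero_add, pow_one]⟩
      haveI : Fact (1 < p ^ (0 + 1)) := ⟨by rw [zero_add, pow_one]; exact hp.one_lt⟩
      have hP2 : p ^ (0 + 1) ≠ 2 := by rwa [zero_add, pow_one]
      have hj0 : j ≠ 0 := hj.ne_zero
      have h := sphere_count_prime (p ^ (0 + 1)) hP2 d hd j hj0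
      have hcast : ((p ^ (0 + 1) : ℕ) : ℝ) = (p : ℝ) ^ (0 + 1) := by push_cast; ring
      rw [hcast] at h
      simpa using h
    · -- inductive step
      have hcount := hensel_step p n d hp2 hn hd j hj
      set j' := ZMod.castHom (pow_dvd_pow p (Nat.le_succ n)) (ZMod (p ^ n)) j with hj'
      have hju : IsUnit j' := hj.map _
      have hih := ih hn j' hju
      set C := ((univ.filter fun y : Fin d → ZMod (p ^ n) => ∑ i, y i ^ 2 = j').card : ℝ)
      have hcast : ((univ.filter fun x : Fin d → ZMod (p ^ (n + 1)) => ∑ i, x i ^ 2 = j).card : ℝ)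
          = (p : ℝ) ^ (d - 1) * C := by
        rw [hcount]; push_cast; ring
      rw [hcast]
      clear_value C j'
      have efac : (p : ℝ) ^ ((n + 1) * (d - 1)) = (p : ℝ) ^ (d - 1) * (p : ℝ) ^ (n * (d - 1)) := by
        rw [← pow_add]
        congr 1
        ring
      have efac2 : (p : ℝ) ^ ((2 * (n + 1) - 1) * (d - 1))
          = ((p : ℝ) ^ (d - 1)) ^ 2 * (p : ℝ) ^ ((2 * n - 1) * (d - 1)) := by
        rw [← pow_mul, ← pow_add]
        congr 1
        have h1 : 1 ≤ 2 * n := le_trans hn (Nat.le_mul_of_pos_left n (by norm_num))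
        have h3 := Nat.sub_add_cancel h1
        have h2 : 2 * (n + 1) - 1 = (2 * n - 1) + 2 := by
          calc 2 * (n + 1) - 1 = 2 * n + 1 + 1 - 1 := by rw [show 2 * (n + 1) = 2 * n + 1 + 1 from by ring]
            _ = 2 * n + 1 := by simp
            _ = (2 * n - 1) + 1 + 1 := by rw [h3]
            _ = (2 * n - 1) + 2 := by ring
        rw [h2]
        ring
      rw [efac, efac2]
      have hfac : ((p : ℝ) ^ (d - 1) * C - (p : ℝ) ^ (d - 1) * (p : ℝ) ^ (n * (d - 1))) ^ 2
          = ((p : ℝ) ^ (d - 1)) ^ 2 * (C - (p : ℝ) ^ (n * (d - 1))) ^ 2 := by ring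
      rw [hfac]
      exact mul_le_mul_of_nonneg_left hih (by positivity)

/-- **Cardinality of spheres in `(ℤ/p^ℓℤ)^d`.** Let `p` be an odd prime, `ℓ ≥ 1`,
`q = p^ℓ`, `d ≥ 2`, and let `j` be a unit of `ℤ/qℤ`. Then the sphere
`S_j = {x : ‖x‖ = j}` satisfies `||S_j| − q^{d−1}| ≤ 2ℓ·q^{d−1}·p^{−(d−1)/2}`. -/
theorem sphere_card_estimate (p ℓ d : ℕ) [Fact p.Prime] (hodd : Odd p)
    (hℓ : 1 ≤ ℓ) (hd : 2 ≤ d) (j : ZMod (p ^ ℓ)) (hj : IsUnit j) :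
    |(((Finset.univ.filter fun x : Fin d → ZMod (p ^ ℓ) => ∑ i, x i ^ 2 = j).card : ℝ)) -
        ((p : ℝ) ^ ℓ) ^ (d - 1)| ≤
      2 * ℓ * ((p : ℝ) ^ ℓ) ^ (d - 1) * (p : ℝ) ^ (-(((d : ℝ) - 1) / 2)) := by
  have hp : p.Prime := Fact.out
  have hp2 : p ≠ 2 := by
    rintro rfl
    simp [Nat.odd_iff] at hodd
  have hd1 : 1 ≤ d := by omega
  have hppos : (0 : ℝ) < p := by exact_mod_cast hp.pos
  have key := sphere_count_pow p d hp2 hd1 ℓ hℓ j hj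
  have hqpow : ((p : ℝ) ^ ℓ) ^ (d - 1) = (p : ℝ) ^ (ℓ * (d - 1)) := (pow_mul _ _ _).symm
  set X := (((Finset.univ.filter fun x : Fin d → ZMod (p ^ ℓ) => ∑ i, x i ^ 2 = j).card : ℝ)) -
      ((p : ℝ) ^ ℓ) ^ (d - 1) with hX
  set R := 2 * (ℓ : ℝ) * ((p : ℝ) ^ ℓ) ^ (d - 1) * (p : ℝ) ^ (-(((d : ℝ) - 1) / 2)) with hR
  have hR0 : 0 ≤ R := by
    rw [hR]
    have : (0:ℝ) < (p : ℝ) ^ (-(((d : ℝ) - 1) / 2)) := Real.rpow_pos_of_pos hppos _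
    positivity
  have hkey' : X ^ 2 ≤ (p : ℝ) ^ ((2 * ℓ - 1) * (d - 1)) := by
    rw [hX, hqpow]
    exact key
  -- now show (p:ℝ)^((2ℓ-1)(d-1)) ≤ R^2
  have hRsq : R ^ 2 = (2 * (ℓ : ℝ)) ^ 2 * (p : ℝ) ^ ((2 * ℓ - 1) * (d - 1)) := by
    have hA : (((p : ℝ) ^ ℓ) ^ (d - 1)) ^ 2 = (p : ℝ) ^ (ℓ * (d - 1) * 2) := by
      rw [hqpow, ← pow_mul]
    have hB : ((p : ℝ) ^ (-(((d : ℝ) - 1) / 2))) ^ 2 = (p : ℝ) ^ (-((d : ℝ) - 1)) := by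
      rw [sq, ← Real.rpow_add hppos]
      ring_nf
    have hprod : (p : ℝ) ^ (ℓ * (d - 1) * 2) * (p : ℝ) ^ (-((d : ℝ) - 1))
        = (p : ℝ) ^ ((2 * ℓ - 1) * (d - 1)) := by
      rw [← Real.rpow_natCast (p : ℝ) (ℓ * (d - 1) * 2), ← Real.rpow_add hppos,
        ← Real.rpow_natCast (p : ℝ) ((2 * ℓ - 1) * (d - 1))]
      congr 1
      have c1 : ((2 * ℓ - 1) * (d - 1) : ℕ) = (2 * ℓ - 1 : ℕ) * (d - 1 : ℕ) := rfl
      have c2 : ((2 * ℓ - 1 : ℕ) : ℝ) = 2 * (ℓ : ℝ) - 1 := by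
        have : 1 ≤ 2 * ℓ := le_trans hℓ (Nat.le_mul_of_pos_left ℓ (by norm_num))
        push_cast [Nat.cast_sub this]
        ring
      have c3 : ((d - 1 : ℕ) : ℝ) = (d : ℝ) - 1 := by
        push_cast [Nat.cast_sub hd1]
        ring
      push_cast [c2, c3]
      ring
    calc R ^ 2 = (2 * (ℓ : ℝ)) ^ 2 * ((((p : ℝ) ^ ℓ) ^ (d - 1)) ^ 2 *
          ((p : ℝ) ^ (-(((d : ℝ) - 1) / 2))) ^ 2) := by rw [hR]; ring
      _ = (2 * (ℓ : ℝ)) ^ 2 * (p : ℝ) ^ ((2 * ℓ - 1) * (d - 1)) := by rw [hA, hB, hprod]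
  have hBR : (p : ℝ) ^ ((2 * ℓ - 1) * (d - 1)) ≤ R ^ 2 := by
    rw [hRsq]
    have h1 : (1 : ℝ) ≤ 2 * (ℓ : ℝ) := by
      have h0 : (1 : ℝ) ≤ (ℓ : ℝ) := by exact_mod_cast hℓ
      nlinarith
    have h2 : (1 : ℝ) ≤ (2 * (ℓ : ℝ)) ^ 2 := by nlinarith
    calc (p : ℝ) ^ ((2 * ℓ - 1) * (d - 1))
        = 1 * (p : ℝ) ^ ((2 * ℓ - 1) * (d - 1)) := (one_mul _).symm
      _ ≤ (2 * (ℓ : ℝ)) ^ 2 * (p : ℝ) ^ ((2 * ℓ - 1) * (d - 1)) :=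
          mul_le_mul_of_nonneg_right h2 (pow_pos hppos _).le
  calc |X| = Real.sqrt (X ^ 2) := (Real.sqrt_sq_eq_abs X).symm
    _ ≤ Real.sqrt (R ^ 2) := Real.sqrt_le_sqrt (le_trans hkey' hBR)
    _ = R := by rw [Real.sqrt_sq hR0]
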